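/- Let G be a finite group acting admissibly on a finite quiver Q̃ without loops or 2-cycles (i.e. the orbit quiver has no loops or 2-cycles). Then the matrix B defined by b_{ij} = Σ_{ĩ∈i} b̃_{ĩ j̃} (for any representative j̃ of the orbit j) is skew-symmetrizable: D·B is skew-symmetric, where D is the diagonal matrix whose entry at an orbit i is the cardinality of the stabilizer in G of any vertex in i. -/
import Mathlib


open scoped Classical

open scoped BigOperators

private lemma fiber_card {Vt : Type*} [Fintype Vt] [DecidableEq Vt]
    {G : Type*} [Group G] [Fintype G] [MulAction G Vt]
    (x z : Vt) (hz : z ∈ MulAction.orbit G x) :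
    (Finset.univ.filter (fun g : G => g • x = z)).card
      = Nat.card (MulAction.stabilizer G x) := by
  obtain ⟨g₀, hg₀⟩ := hz
  have hg₀' : g₀ • x = z := hg₀
  rw [Nat.card_eq_fintype_card, Fintype.card_subtype]
  apply Finset.card_bij' (fun g _ => g₀⁻¹ * g) (fun s _ => g₀ * s)
  · intro g hg
    simp only [Finset.mem_filter, Finset.mem_univ, true_and] at hg ⊢
    rw [MulAction.mem_stabilizer_iff, mul_smul, hg, ← hg₀', ← mul_smul, inv_mul_cancel, one_smul]
  · intro s hs
    simp only [Finset.mem_filter, Finset.mem_univ, true_and] at hs ⊢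
    rw [mul_smul, MulAction.mem_stabilizer_iff.mp hs, hg₀']
  · intro g _; simp
  · intro s _; simp

private lemma sum_group_eq {Vt : Type*} [Fintype Vt] [DecidableEq Vt]
    {G : Type*} [Group G] [Fintype G] [MulAction G Vt]
    (Bt : Vt → Vt → ℤ) (x y : Vt) :
    (∑ g : G, Bt (g • x) y)
      = (Nat.card (MulAction.stabilizer G x) : ℤ) *
        ∑ z ∈ Finset.univ.filter (· ∈ MulAction.orbit G x), Bt z y := by
  rw [← Finset.sum_fiberwise_of_maps_to (g := fun g : G => g • x)
      (t := Finset.univ.filter (· ∈ MulAction.orbit G x))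
      (fun g _ => by simp [MulAction.mem_orbit _ g]) (fun g => Bt (g • x) y),
    Finset.mul_sum]
  refine Finset.sum_congr rfl fun z hz => ?_
  simp only [Finset.mem_filter, Finset.mem_univ, true_and] at hz
  calc (∑ g ∈ Finset.univ.filter (fun g : G => g • x = z), Bt (g • x) y)
      = ∑ _g ∈ Finset.univ.filter (fun g : G => g • x = z), Bt z y := by
        refine Finset.sum_congr rfl fun g hg => ?_
        simp only [Finset.mem_filter] at hg
        rw [hg.2]
    _ = _ := by
        rw [Finset.sum_const, nsmul_eq_mul]
        rw [fiber_card x z hz]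

/-- Folding a skew-symmetric matrix along an admissible group action yields a
skew-symmetrizable matrix.  Here `Bt` is the skew-symmetric matrix of a finite quiver
`Q̃` without loops or `2`-cycles, `G` acts on `Q̃` by quiver automorphisms
(`Bt (g•x) (g•y) = Bt x y`), and admissibility of the action means that the orbit
quiver has no loops (`Bt` vanishes on pairs in a common orbit) and no `2`-cycles (no
pair of orbits with arrows in both directions).  The folded matrix is
`b x y = Σ_{z ∈ orbit(x)} Bt z y`; it only depends on the orbits of `x` and `y`, and
`D b` is skew-symmetric where `D` is diagonal with entries the cardinalities of the
stabilizers. -/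
theorem folded_matrix_skew_symmetrizable
    {Vt : Type*} [Fintype Vt] [DecidableEq Vt]
    {G : Type*} [Group G] [Fintype G] [MulAction G Vt]
    (Bt : Vt → Vt → ℤ)
    (hskew : ∀ x y, Bt y x = -Bt x y)
    (hinv : ∀ (g : G) (x y : Vt), Bt (g • x) (g • y) = Bt x y)
    (hnoloop : ∀ x y : Vt, y ∈ MulAction.orbit G x → Bt x y = 0)
    (hno2cycle : ∀ x y x' y' : Vt, x' ∈ MulAction.orbit G x → y' ∈ MulAction.orbit G y →
      0 < Bt x y → Bt x' y' ≤ 0 → Bt x' y' = 0) :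
    (∀ x x' y y' : Vt, x' ∈ MulAction.orbit G x → y' ∈ MulAction.orbit G y →
        (∑ z ∈ Finset.univ.filter (· ∈ MulAction.orbit G x), Bt z y) =
          ∑ z ∈ Finset.univ.filter (· ∈ MulAction.orbit G x'), Bt z y') ∧
      (∀ x y : Vt,
        (Nat.card (MulAction.stabilizer G x) : ℤ) *
            (∑ z ∈ Finset.univ.filter (· ∈ MulAction.orbit G x), Bt z y) =
          -((Nat.card (MulAction.stabilizer G y) : ℤ) *
            (∑ z ∈ Finset.univ.filter (· ∈ MulAction.orbit G y), Bt z x))) := by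
  constructor
  · intro x x' y y' hx hy
    have horb : MulAction.orbit G x' = MulAction.orbit G x :=
      (MulAction.orbit_eq_iff).mpr hx
    rw [horb]
    obtain ⟨g, hg⟩ := hy
    have hg' : g • y = y' := hg
    subst hg'
    refine Finset.sum_bij' (fun z _ => g • z) (fun z _ => g⁻¹ • z) ?_ ?_ ?_ ?_ ?_
    · intro z hz
      simp only [Finset.mem_filter, Finset.mem_univ, true_and] at hz ⊢
      obtain ⟨h, hh⟩ := hz
      exact ⟨g * h, show (g * h) • x = g • z by rw [mul_smul, show h • x = z from hh]⟩
    · intro z hz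
      simp only [Finset.mem_filter, Finset.mem_univ, true_and] at hz ⊢
      obtain ⟨h, hh⟩ := hz
      exact ⟨g⁻¹ * h, show (g⁻¹ * h) • x = g⁻¹ • z by rw [mul_smul, show h • x = z from hh]⟩
    · intro z _; simp [← mul_smul]
    · intro z _; simp [← mul_smul]
    · intro z _; exact (hinv g z y).symm
  · intro x y
    rw [← sum_group_eq, ← sum_group_eq]
    have h1 : (∑ g : G, Bt (g • x) y) = ∑ g : G, Bt x (g⁻¹ • y) := by
      refine Finset.sum_congr rfl fun g _ => ?_
      rw [← hinv g⁻¹ (g • x) y, ← mul_smul, inv_mul_cancel, one_smul]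
    rw [h1, ← Finset.sum_neg_distrib]
    exact Fintype.sum_equiv (Equiv.inv G) _ _ fun g => by rw [hskew]; rfl
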